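/- Let μ, ε, Δx, Δt > 0, let L ≥ 0 and q ≥ 1 be integers, fix (x₀,t₀) ∈ ℝ², and let p^H(x,t) = ∑_{ℓ=0}^{L} ∑_{s=0}^{q} c^H_{ℓ,s} ((x−x₀)/Δx)^{ℓ} ((t−t₀)/Δt)^{s} and p^E(x,t) = ∑_{ℓ=0}^{L} ∑_{s=0}^{q} c^E_{ℓ,s} ((x−x₀)/Δx)^{ℓ} ((t−t₀)/Δt)^{s}, where the coefficients satisfy, for all 0 ≤ ℓ ≤ L and 1 ≤ s ≤ q, the recursion c^H_{ℓ,s} = −((ℓ+1) Δt / (μ s Δx)) c^E_{ℓ+1,s−1} and c^E_{ℓ,s} = −((ℓ+1) Δt / (ε s Δx)) c^H_{ℓ+1,s−1}, with the convention c^H_{L+1,s} = c^E_{L+1,s} = 0. Then there exist polynomials r_H, r_E ∈ ℝ[X] of degree at most L−1 such that μ ∂_t p^H(x,t) + ∂_x p^E(x,t) = ((t−t₀)/Δt)^{q} · r_H(x) and ε ∂_t p^E(x,t) + ∂_x p^H(x,t) = ((t−t₀)/Δt)^{q} · r_E(x) for all (x,t); that is, the residuals of the 1-D Maxwell equations for the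 Hermite–Taylor polynomials contain only monomials whose power of (t−t₀) equals exactly q. -/

import Mathlib

/-- The Hermite–Taylor space-time polynomial with coefficients `c`, centered at
`(x₀, t₀)` and scaled by `Δx, Δt`, of spatial degree `L` and temporal degree `q`. -/
noncomputable def hermiteTaylorPoly (c : ℕ → ℕ → ℝ) (x₀ t₀ Δx Δt : ℝ) (L q : ℕ)
    (x t : ℝ) : ℝ :=
  ∑ ℓ ∈ Finset.range (L + 1), ∑ s ∈ Finset.range (q + 1),
    c ℓ s * ((x - x₀) / Δx) ^ ℓ * ((t - t₀) / Δt) ^ s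

open Finset in
lemma ht_hasDerivAt_t (c : ℕ → ℕ → ℝ) (x₀ t₀ Δx Δt : ℝ) (L q : ℕ) (x t : ℝ) :
    HasDerivAt (fun t' => hermiteTaylorPoly c x₀ t₀ Δx Δt L q x t')
      (∑ ℓ ∈ range (L + 1), ∑ s ∈ range (q + 1),
        (c ℓ s * ((x - x₀) / Δx) ^ ℓ) *
          ((s : ℝ) * ((t - t₀) / Δt) ^ (s - 1) * (1 / Δt))) t := by
  unfold hermiteTaylorPoly
  apply HasDerivAt.fun_sum; intro ℓ _
  apply HasDerivAt.fun_sum; intro s _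
  exact ((((hasDerivAt_id t).sub_const t₀).div_const Δt).pow s).const_mul _

open Finset in
lemma ht_hasDerivAt_x (c : ℕ → ℕ → ℝ) (x₀ t₀ Δx Δt : ℝ) (L q : ℕ) (x t : ℝ) :
    HasDerivAt (fun x' => hermiteTaylorPoly c x₀ t₀ Δx Δt L q x' t)
      (∑ ℓ ∈ range (L + 1), ∑ s ∈ range (q + 1),
        (c ℓ s * ((ℓ : ℝ) * ((x - x₀) / Δx) ^ (ℓ - 1) * (1 / Δx))) *
          ((t - t₀) / Δt) ^ s) x := by
  unfold hermiteTaylorPoly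
  apply HasDerivAt.fun_sum; intro ℓ _
  apply HasDerivAt.fun_sum; intro s _
  exact (((((hasDerivAt_id x).sub_const x₀).div_const Δx).pow ℓ).const_mul (c ℓ s)).mul_const _

open Finset Polynomial in
lemma ht_key (a Δx Δt : ℝ) (ha : a ≠ 0) (hΔx : Δx ≠ 0) (hΔt : Δt ≠ 0)
    (L q : ℕ) (x₀ t₀ : ℝ) (cH cE : ℕ → ℕ → ℝ)
    (hconvE : ∀ s : ℕ, cE (L + 1) s = 0)
    (hrec : ∀ ℓ s : ℕ, ℓ ≤ L → s + 1 ≤ q →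
      cH ℓ (s + 1) = -((ℓ + 1 : ℝ) * Δt / (a * (s + 1 : ℝ) * Δx)) * cE (ℓ + 1) s) :
    ∃ r : Polynomial ℝ, r.degree < (L : ℕ) ∧ ∀ x t : ℝ,
      a * deriv (fun t' => hermiteTaylorPoly cH x₀ t₀ Δx Δt L q x t') t
        + deriv (fun x' => hermiteTaylorPoly cE x₀ t₀ Δx Δt L q x' t) x
        = ((t - t₀) / Δt) ^ q * r.eval x := by
  refine ⟨∑ ℓ ∈ range L, Polynomial.C (cE (ℓ + 1) q * ((ℓ : ℝ) + 1) / (Δx * Δx ^ ℓ)) *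
      (Polynomial.X - Polynomial.C x₀) ^ ℓ, ?_, ?_⟩
  · refine lt_of_le_of_lt (Polynomial.degree_sum_le _ _) ?_
    rw [Finset.sup_lt_iff (by exact_mod_cast WithBot.bot_lt_coe L)]
    intro ℓ hℓ
    calc (Polynomial.C (cE (ℓ + 1) q * ((ℓ : ℝ) + 1) / (Δx * Δx ^ ℓ)) *
        (Polynomial.X - Polynomial.C x₀) ^ ℓ).degree
        ≤ (Polynomial.C (cE (ℓ + 1) q * ((ℓ : ℝ) + 1) / (Δx * Δx ^ ℓ))).degree +
          ((Polynomial.X - Polynomial.C x₀) ^ ℓ).degree := Polynomial.degree_mul_le _ _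
      _ ≤ 0 + (ℓ : WithBot ℕ) := by
          gcongr
          · exact Polynomial.degree_C_le
          · simpa using Polynomial.degree_pow_le _ ℓ
          
      _ < (L : WithBot ℕ) := by
          rw [zero_add]
          exact_mod_cast Finset.mem_range.mp hℓ
  · intro x t
    rw [(ht_hasDerivAt_t cH x₀ t₀ Δx Δt L q x t).deriv,
        (ht_hasDerivAt_x cE x₀ t₀ Δx Δt L q x t).deriv]
    set X := (x - x₀) / Δx with hX
    set T := (t - t₀) / Δt with hT
    -- reindex the time-derivative sum in s
    have h1 : a * ∑ ℓ ∈ range (L + 1), ∑ s ∈ range (q + 1),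
        (cH ℓ s * X ^ ℓ) * ((s : ℝ) * T ^ (s - 1) * (1 / Δt))
        = ∑ ℓ ∈ range (L + 1), ∑ s ∈ range q,
          a * ((cH ℓ (s + 1) * X ^ ℓ) * (((s : ℝ) + 1) * T ^ s * (1 / Δt))) := by
      rw [Finset.mul_sum]
      refine Finset.sum_congr rfl fun ℓ _ => ?_
      rw [Finset.mul_sum, Finset.sum_range_succ']
      push_cast
      simp
    -- reindex the space-derivative sum in ℓ
    have h2 : ∑ ℓ ∈ range (L + 1), ∑ s ∈ range (q + 1),
        (cE ℓ s * ((ℓ : ℝ) * X ^ (ℓ - 1) * (1 / Δx))) * T ^ s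
        = ∑ ℓ ∈ range L, ∑ s ∈ range (q + 1),
          (cE (ℓ + 1) s * (((ℓ : ℝ) + 1) * X ^ ℓ * (1 / Δx))) * T ^ s := by
      rw [Finset.sum_range_succ']
      push_cast
      simp
    rw [h1, h2]
    -- split off ℓ = L in the first sum; it vanishes by the recursion and convention
    rw [Finset.sum_range_succ (fun ℓ => ∑ s ∈ range q,
      a * ((cH ℓ (s + 1) * X ^ ℓ) * (((s : ℝ) + 1) * T ^ s * (1 / Δt)))) L]
    have hL0 : ∑ s ∈ range q,
        a * ((cH L (s + 1) * X ^ L) * (((s : ℝ) + 1) * T ^ s * (1 / Δt))) = 0 := by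
      refine Finset.sum_eq_zero fun s hs => ?_
      rw [hrec L s le_rfl (Finset.mem_range.mp hs), hconvE s]
      ring
    rw [hL0, add_zero]
    -- split off s = q in the second sum
    have h3 : ∀ ℓ ∈ range L, ∑ s ∈ range (q + 1),
        (cE (ℓ + 1) s * (((ℓ : ℝ) + 1) * X ^ ℓ * (1 / Δx))) * T ^ s
        = (∑ s ∈ range q, (cE (ℓ + 1) s * (((ℓ : ℝ) + 1) * X ^ ℓ * (1 / Δx))) * T ^ s)
          + (cE (ℓ + 1) q * (((ℓ : ℝ) + 1) * X ^ ℓ * (1 / Δx))) * T ^ q := by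
      intro ℓ _
      rw [Finset.sum_range_succ]
    rw [Finset.sum_congr rfl h3, Finset.sum_add_distrib, ← add_assoc, ← Finset.sum_add_distrib]
    have hcancel : ∑ ℓ ∈ range L,
        ((∑ s ∈ range q, a * ((cH ℓ (s + 1) * X ^ ℓ) * (((s : ℝ) + 1) * T ^ s * (1 / Δt))))
          + ∑ s ∈ range q, (cE (ℓ + 1) s * (((ℓ : ℝ) + 1) * X ^ ℓ * (1 / Δx))) * T ^ s) = 0 := by
      refine Finset.sum_eq_zero fun ℓ hℓ => ?_
      rw [← Finset.sum_add_distrib]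
      refine Finset.sum_eq_zero fun s hs => ?_
      rw [hrec ℓ s (Nat.le_of_lt (Finset.mem_range.mp hℓ)) (Finset.mem_range.mp hs)]
      have hs1 : ((s : ℝ) + 1) ≠ 0 := by positivity
      field_simp
      ring
    rw [hcancel, zero_add]
    -- evaluate the polynomial
    rw [Polynomial.eval_finset_sum, Finset.mul_sum]
    refine Finset.sum_congr rfl fun ℓ _ => ?_
    simp only [Polynomial.eval_mul, Polynomial.eval_C, Polynomial.eval_pow,
      Polynomial.eval_sub, Polynomial.eval_X]
    rw [hX, hT, div_pow]
    have hΔxp : Δx ^ ℓ ≠ 0 := pow_ne_zero _ hΔx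
    field_simp

/-- If the coefficients of the Hermite–Taylor polynomials `p^H, p^E` satisfy the
constant-coefficient 1-D Maxwell recursion (with the convention that coefficients of
spatial index `L+1` vanish), then the residuals of the 1-D Maxwell equations are of
the form `((t-t₀)/Δt)^q · r(x)` for polynomials `r_H, r_E` of degree at most `L-1`. -/
theorem hermite_taylor_residual_structure
    (μ ε Δx Δt : ℝ) (hμ : 0 < μ) (hε : 0 < ε) (hΔx : 0 < Δx) (hΔt : 0 < Δt)
    (L q : ℕ) (hq : 1 ≤ q) (x₀ t₀ : ℝ) (cH cE : ℕ → ℕ → ℝ)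
    (hconv : ∀ s : ℕ, cH (L + 1) s = 0 ∧ cE (L + 1) s = 0)
    (hrecH : ∀ ℓ s : ℕ, ℓ ≤ L → s + 1 ≤ q →
      cH ℓ (s + 1) = -((ℓ + 1 : ℝ) * Δt / (μ * (s + 1 : ℝ) * Δx)) * cE (ℓ + 1) s)
    (hrecE : ∀ ℓ s : ℕ, ℓ ≤ L → s + 1 ≤ q →
      cE ℓ (s + 1) = -((ℓ + 1 : ℝ) * Δt / (ε * (s + 1 : ℝ) * Δx)) * cH (ℓ + 1) s) :
    ∃ (rH rE : Polynomial ℝ), rH.degree < (L : ℕ) ∧ rE.degree < (L : ℕ) ∧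
      (∀ x t : ℝ,
        μ * deriv (fun t' => hermiteTaylorPoly cH x₀ t₀ Δx Δt L q x t') t
          + deriv (fun x' => hermiteTaylorPoly cE x₀ t₀ Δx Δt L q x' t) x
          = ((t - t₀) / Δt) ^ q * rH.eval x) ∧
      (∀ x t : ℝ,
        ε * deriv (fun t' => hermiteTaylorPoly cE x₀ t₀ Δx Δt L q x t') t
          + deriv (fun x' => hermiteTaylorPoly cH x₀ t₀ Δx Δt L q x' t) x
          = ((t - t₀) / Δt) ^ q * rE.eval x) := by
  obtain ⟨rH, hrHdeg, hrH⟩ := ht_key μ Δx Δt hμ.ne' hΔx.ne' hΔt.ne' L q x₀ t₀ cH cE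
    (fun s => (hconv s).2) hrecH
  obtain ⟨rE, hrEdeg, hrE⟩ := ht_key ε Δx Δt hε.ne' hΔx.ne' hΔt.ne' L q x₀ t₀ cE cH
    (fun s => (hconv s).1) hrecE
  exact ⟨rH, rE, hrHdeg, hrEdeg, hrH, hrE⟩
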